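/- Let a, b > 0 and v ∈ (0, 1) with 1/2 < v < 1. Then (1 − v)a + v·b ≤ v(√a − √b)² − r₁(⁴√(ab) − √a)² + K(⁴√h, 2)^{−r̂₁} · a^{1−v} b^{v}, where h = b/a, r = min{v, 1 − v}, r₁ = min{2r, 1 − 2r} and r̂₁ = min{2r₁, 1 − 2r₁}. -/

import Mathlib

/-- The Kantorovich constant `K(t, 2) = (t + 1)^2 / (4 t)`. -/
noncomputable def Kant (t : ℝ) : ℝ := (t + 1) ^ 2 / (4 * t)

lemma kant_pos {t : ℝ} (ht : 0 < t) : 0 < Kant t := by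
  unfold Kant; positivity

lemma kant_inv {t : ℝ} (ht : 0 < t) : Kant t⁻¹ = Kant t := by
  unfold Kant; field_simp; ring

lemma zuo_half {t l : ℝ} (ht : 0 < t) (h0 : 0 ≤ l) (h1 : l ≤ 1/2) :
    Kant t ^ l * t ^ l ≤ l * t + (1 - l) := by
  have hK := kant_pos ht
  have h2 : Kant t ^ l * t ^ l = ((t + 1) / 2) ^ (2 * l) := by
    rw [← Real.mul_rpow hK.le ht.le]
    have e : Kant t * t = ((t + 1) / 2) ^ (2 : ℕ) := by
      unfold Kant; field_simp; ring
    rw [e, ← Real.rpow_natCast ((t + 1) / 2) 2, ← Real.rpow_mul (by positivity)]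
    norm_num
  have hg := Real.geom_mean_le_arith_mean2_weighted (by linarith : (0:ℝ) ≤ 2 * l)
    (by linarith : (0:ℝ) ≤ 1 - 2 * l) (by positivity : (0:ℝ) ≤ (t + 1) / 2)
    (by norm_num : (0:ℝ) ≤ 1) (by ring : 2 * l + (1 - 2 * l) = 1)
  rw [Real.one_rpow, mul_one] at hg
  rw [h2]
  linarith [hg]

lemma zuo {t l : ℝ} (ht : 0 < t) (h0 : 0 ≤ l) (h1 : l ≤ 1) :
    Kant t ^ min l (1 - l) * t ^ l ≤ l * t + (1 - l) := by
  rcases le_or_gt l (1/2) with hc | hc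
  · rw [min_eq_left (by linarith)]
    exact zuo_half ht h0 hc
  · rw [min_eq_right (by linarith)]
    have hz := zuo_half (t := t⁻¹) (l := 1 - l) (by positivity) (by linarith) (by linarith)
    rw [kant_inv ht, Real.inv_rpow ht.le] at hz
    have hQ : 0 < t ^ (1 - l) := Real.rpow_pos_of_pos ht _
    have h3 := mul_le_mul_of_nonneg_right hz (le_of_lt (mul_pos ht hQ))
    have e1 : Kant t ^ (1 - l) * (t ^ (1 - l))⁻¹ * (t * t ^ (1 - l))
        = Kant t ^ (1 - l) * t := by field_simp
    have e2 : ((1 - l) * t⁻¹ + (1 - (1 - l))) * (t * t ^ (1 - l))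
        = ((1 - l) + l * t) * t ^ (1 - l) := by field_simp; ring
    rw [e1, e2] at h3
    have e3 : t ^ l * t ^ (1 - l) = t := by
      rw [← Real.rpow_add ht]; norm_num
    nlinarith [Real.rpow_pos_of_pos (kant_pos ht) (1 - l), mul_le_mul_of_nonneg_left h3 (le_of_lt (Real.rpow_pos_of_pos ht l))]


lemma keyA {u v : ℝ} (hu : 0 < u) (hv0 : 1/2 < v) (hv34 : v ≤ 3/4) :
    (1 - v) + v * u ^ 4 ≤ v * (1 - u ^ 2) ^ 2 - (2 * v - 1) * (u - 1) ^ 2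
      + Kant u ^ (-(min (4 * v - 2) (3 - 4 * v))) * u ^ ((4:ℝ) * v) := by
  have hK := kant_pos hu
  set m := min (4 * v - 2) (3 - 4 * v) with hm
  have hz := zuo (t := u⁻¹) (l := 4 * v - 2) (by positivity) (by linarith) (by linarith)
  rw [kant_inv hu, Real.inv_rpow hu.le,
    show (1:ℝ) - (4 * v - 2) = 3 - 4 * v by ring, ← hm] at hz
  set P := Kant u ^ m with hPdef
  set Q := u ^ (4 * v - 2 : ℝ) with hQdef
  have hP : 0 < P := Real.rpow_pos_of_pos hK _
  have hQ : 0 < Q := Real.rpow_pos_of_pos hu _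
  -- hz : P * Q⁻¹ ≤ (4*v-2) * u⁻¹ + (1 - (4*v-2))
  have h1 : P * u ≤ ((4 * v - 2) + (3 - 4 * v) * u) * Q := by
    have h0 := mul_le_mul_of_nonneg_right hz (le_of_lt (mul_pos hu hQ))
    have e1 : P * Q⁻¹ * (u * Q) = P * u := by field_simp
    have e2 : ((4 * v - 2) * u⁻¹ + (3 - 4 * v)) * (u * Q)
        = ((4 * v - 2) + (3 - 4 * v) * u) * Q := by field_simp
    rw [e1, e2] at h0; exact h0
  have hRu : u ^ ((4:ℝ) * v) = Q * u ^ 2 := by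
    rw [hQdef, show ((4:ℝ) * v) = (4 * v - 2) + ((2:ℕ):ℝ) by push_cast; ring,
      Real.rpow_add hu, Real.rpow_natCast]
    norm_num
  have hneg : Kant u ^ (-m) = P⁻¹ := by
    rw [Real.rpow_neg hK.le, hPdef]
  rw [hneg, hRu]
  have hfinQ : (((1 - v) + v * u ^ 4 - v * (1 - u ^ 2) ^ 2 + (2 * v - 1) * (u - 1) ^ 2) * P) * Q
      ≤ (Q * u ^ 2) * Q := by
    nlinarith [mul_le_mul_of_nonneg_right h1 (le_of_lt (mul_pos hu hP)),
      sq_nonneg (u * (P - Q)), hP.le, hQ.le, hu.le]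
  have hfin := le_of_mul_le_mul_right hfinQ hQ
  have h2 := (le_div_iff₀ hP).mpr hfin
  rw [div_eq_inv_mul] at h2
  linarith

lemma keyB {u v : ℝ} (hu : 0 < u) (hv34 : 3/4 ≤ v) (hv : v < 1) :
    (1 - v) + v * u ^ 4 ≤ v * (1 - u ^ 2) ^ 2 - (2 - 2 * v) * (u - 1) ^ 2
      + Kant u ^ (-(min (4 - 4 * v) (4 * v - 3))) * u ^ ((4:ℝ) * v) := by
  have hK := kant_pos hu
  set m := min (4 - 4 * v) (4 * v - 3) with hm
  have hz := zuo (t := u) (l := 4 - 4 * v) hu (by linarith) (by linarith)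
  rw [show (1:ℝ) - (4 - 4 * v) = 4 * v - 3 by ring, ← hm] at hz
  set P := Kant u ^ m with hPdef
  set Q := u ^ (4 - 4 * v : ℝ) with hQdef
  have hP : 0 < P := Real.rpow_pos_of_pos hK _
  have hQ : 0 < Q := Real.rpow_pos_of_pos hu _
  set R := u ^ ((4:ℝ) * v) with hRdef
  have hR : 0 < R := Real.rpow_pos_of_pos hu _
  have hQR : Q * R = u ^ 4 := by
    rw [hQdef, hRdef, ← Real.rpow_add hu,
      show (4 - 4 * v) + (4:ℝ) * v = ((4:ℕ):ℝ) by push_cast; ring, Real.rpow_natCast]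
  have hneg : Kant u ^ (-m) = P⁻¹ := by
    rw [Real.rpow_neg hK.le, hPdef]
  rw [hneg]
  have hfinQ : (((1 - v) + v * u ^ 4 - v * (1 - u ^ 2) ^ 2 + (2 - 2 * v) * (u - 1) ^ 2) * P) * Q
      ≤ R * Q := by
    nlinarith [mul_le_mul_of_nonneg_left hz (le_of_lt (mul_pos hP hQ)),
      sq_nonneg (P * Q - u ^ 2), hP.le, hQ.le, hu.le, hQR]
  have hfin := le_of_mul_le_mul_right hfinQ hQ
  have h2 := (le_div_iff₀ hP).mpr hfin
  rw [div_eq_inv_mul] at h2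
  linarith


theorem stmt_6 (a b v : ℝ) (ha : 0 < a) (hb : 0 < b) (hv0 : 1 / 2 < v) (hv : v < 1)
    (h r r1 rh1 : ℝ) (hh : h = b / a) (hr : r = min v (1 - v))
    (hr1 : r1 = min (2 * r) (1 - 2 * r)) (hrh1 : rh1 = min (2 * r1) (1 - 2 * r1)) :
    (1 - v) * a + v * b ≤
      v * (Real.sqrt a - Real.sqrt b) ^ 2
        - r1 * ((a * b) ^ ((1 : ℝ) / 4) - Real.sqrt a) ^ 2
        + Kant (h ^ ((1 : ℝ) / 4)) ^ (-rh1) * (a ^ (1 - v) * b ^ v) := by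
  subst hh hr hr1 hrh1
  rw [min_eq_right (by linarith : 1 - v ≤ v)]
  have hba : 0 < b / a := div_pos hb ha
  set u := (b / a) ^ ((1 : ℝ) / 4) with hudef
  have hu : 0 < u := Real.rpow_pos_of_pos hba _
  have hu4 : u ^ (4:ℕ) = b / a := by
    rw [hudef, ← Real.rpow_natCast ((b/a) ^ ((1:ℝ)/4)) 4, ← Real.rpow_mul hba.le]
    norm_num
  have hb' : b = a * u ^ 4 := by
    field_simp at hu4; linarith [hu4]
  have hsb : Real.sqrt b = Real.sqrt a * u ^ 2 := by
    rw [hb', show a * u ^ 4 = a * (u^2)^2 by ring, Real.sqrt_mul ha.le,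
      Real.sqrt_sq (by positivity)]
  have hab : (a * b) ^ ((1:ℝ)/4) = Real.sqrt a * u := by
    have h1 : a * b = (Real.sqrt a * u) ^ (4:ℕ) := by
      rw [hb', show (Real.sqrt a * u) ^ (4:ℕ) = ((Real.sqrt a)^2)^2 * u^4 by ring,
        Real.sq_sqrt ha.le]
      ring
    rw [h1, ← Real.rpow_natCast (Real.sqrt a * u) 4, ← Real.rpow_mul (by positivity)]
    norm_num
  have hav : a ^ ((1:ℝ) - v) * b ^ v = a * u ^ ((4:ℝ) * v) := by
    rw [hb', Real.mul_rpow ha.le (by positivity), ← Real.rpow_natCast u 4,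
      ← Real.rpow_mul hu.le, ← mul_assoc, ← Real.rpow_add ha]
    norm_num
  rw [hsb, hab, hav, hb']
  rcases le_or_gt v (3/4) with hc | hc
  · rw [min_eq_right (by linarith : 1 - 2 * (1 - v) ≤ 2 * (1 - v)),
      show (1:ℝ) - 2 * (1 - v) = 2 * v - 1 by ring,
      show 2 * (2 * v - 1) = 4 * v - 2 by ring,
      show (1:ℝ) - (4 * v - 2) = 3 - 4 * v by ring]
    have key := keyA hu hv0 hc
    set s := Real.sqrt a with hs
    have hs2 : s ^ 2 = a := Real.sq_sqrt ha.le
    rw [← hs2]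
    nlinarith [mul_le_mul_of_nonneg_left key (sq_nonneg s)]
  · rw [min_eq_left (by linarith : 2 * (1 - v) ≤ 1 - 2 * (1 - v)),
      show 2 * (2 * (1 - v)) = 4 - 4 * v by ring,
      show (1:ℝ) - (4 - 4 * v) = 4 * v - 3 by ring]
    have key := keyB hu (le_of_lt hc) hv
    set s := Real.sqrt a with hs
    have hs2 : s ^ 2 = a := Real.sq_sqrt ha.le
    rw [← hs2]
    nlinarith [mul_le_mul_of_nonneg_left key (sq_nonneg s)]
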